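/- For all θ with 0 < θ < 2π, the function ψ(θ) = (θ - sin θ)/(1 - cos θ) satisfies ψ'(θ) > 0; equivalently, ψ is strictly increasing on the interval (0, 2π). -/

import Mathlib

open Real Set

lemma sin_sub_mul_cos_pos : ∀ t ∈ Set.Ioo (0:ℝ) π, t * Real.cos t < Real.sin t := by
  have hmono : StrictMonoOn (fun t : ℝ => Real.sin t - t * Real.cos t) (Set.Icc 0 π) := by
    apply strictMonoOn_of_deriv_pos (convex_Icc 0 π)
    · fun_prop
    · intro x hx
      rw [interior_Icc] at hx
      have hd : HasDerivAt (fun t : ℝ => Real.sin t - t * Real.cos t)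
          (Real.cos x - (1 * Real.cos x + x * (-Real.sin x))) x :=
        (Real.hasDerivAt_sin x).sub ((hasDerivAt_id x).mul (Real.hasDerivAt_cos x))
      rw [hd.deriv]
      have := Real.sin_pos_of_pos_of_lt_pi hx.1 hx.2
      nlinarith [mul_pos hx.1 this]
  intro t ht
  have h0 : (0:ℝ) ∈ Set.Icc (0:ℝ) π := ⟨le_refl 0, Real.pi_pos.le⟩
  have ht' : t ∈ Set.Icc (0:ℝ) π := ⟨ht.1.le, ht.2.le⟩
  have := hmono h0 ht' ht.1
  simp at this
  linarith

lemma cos_ne_one : ∀ θ ∈ Set.Ioo (0:ℝ) (2*π), Real.cos θ ≠ 1 := by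
  intro θ hθ h
  rcases (Real.cos_eq_one_iff θ).mp h with ⟨n, hn⟩
  have hπ := Real.pi_pos
  have h1 : (0:ℝ) < (n:ℝ) := by nlinarith [hθ.1]
  have h2 : (n:ℝ) < 1 := by nlinarith [hθ.2]
  have : (0:ℤ) < n := by exact_mod_cast h1
  have : (n:ℤ) < 1 := by exact_mod_cast h2
  omega

lemma one_sub_cos_pos : ∀ θ ∈ Set.Ioo (0:ℝ) (2*π), 0 < 1 - Real.cos θ := by
  intro θ hθ
  have h1 := Real.cos_le_one θ
  have h2 := cos_ne_one θ hθ
  cases lt_or_eq_of_le h1 with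
  | inl h => linarith
  | inr h => exact absurd h h2

lemma num_pos : ∀ θ ∈ Set.Ioo (0:ℝ) (2*π), 0 < 2 - 2 * Real.cos θ - θ * Real.sin θ := by
  intro θ hθ
  set t := θ / 2 with ht
  have htmem : t ∈ Set.Ioo (0:ℝ) π := ⟨by simpa [ht] using hθ.1, by
    have := hθ.2; rw [ht]; linarith⟩
  have h1 := sin_sub_mul_cos_pos t htmem
  have hs : 0 < Real.sin t := Real.sin_pos_of_pos_of_lt_pi htmem.1 htmem.2
  have hθt : θ = 2 * t := by rw [ht]; ring
  have hcos : Real.cos θ = 1 - 2 * Real.sin t ^ 2 := by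
    rw [hθt, Real.cos_two_mul]
    have := Real.sin_sq_add_cos_sq t
    linarith
  have hsin : Real.sin θ = 2 * Real.sin t * Real.cos t := by
    rw [ht]; rw [← Real.sin_two_mul]; ring_nf
  rw [hcos, hsin, hθt]
  nlinarith

lemma hasDeriv_psi : ∀ θ ∈ Set.Ioo (0:ℝ) (2*π),
    HasDerivAt (fun θ : ℝ => (θ - Real.sin θ) / (1 - Real.cos θ))
      ((2 - 2 * Real.cos θ - θ * Real.sin θ) / (1 - Real.cos θ)^2) θ := by
  intro θ hθ
  have hne : (1 - Real.cos θ) ≠ 0 := (one_sub_cos_pos θ hθ).ne'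
  have hu : HasDerivAt (fun θ : ℝ => θ - Real.sin θ) (1 - Real.cos θ) θ :=
    (hasDerivAt_id θ).sub (Real.hasDerivAt_sin θ)
  have hv : HasDerivAt (fun θ : ℝ => 1 - Real.cos θ) (0 - (-Real.sin θ)) θ :=
    (hasDerivAt_const θ 1).sub (Real.hasDerivAt_cos θ)
  have : HasDerivAt (fun θ : ℝ => (θ - Real.sin θ) / (1 - Real.cos θ))
      (((1 - Real.cos θ) * (1 - Real.cos θ) - (θ - Real.sin θ) * (0 - -Real.sin θ)) / (1 - Real.cos θ) ^ 2) θ :=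
    hu.div hv hne
  convert this using 1
  have hpyth := Real.sin_sq_add_cos_sq θ
  field_simp
  ring_nf
  nlinarith [Real.sin_sq_add_cos_sq θ]

theorem psi_strict_increasing :
    (∀ θ ∈ Set.Ioo (0:ℝ) (2*π),
      0 < deriv (fun θ : ℝ => (θ - Real.sin θ) / (1 - Real.cos θ)) θ) ∧
    StrictMonoOn (fun θ : ℝ => (θ - Real.sin θ) / (1 - Real.cos θ))
      (Set.Ioo (0:ℝ) (2*π)) := by
  have hderiv : ∀ θ ∈ Set.Ioo (0:ℝ) (2*π),
      0 < deriv (fun θ : ℝ => (θ - Real.sin θ) / (1 - Real.cos θ)) θ := by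
    intro θ hθ
    rw [(hasDeriv_psi θ hθ).deriv]
    exact div_pos (num_pos θ hθ) (pow_pos (one_sub_cos_pos θ hθ) 2)
  refine ⟨hderiv, ?_⟩
  apply strictMonoOn_of_deriv_pos (convex_Ioo 0 (2*π))
  · intro θ hθ
    exact ((hasDeriv_psi θ hθ).differentiableAt).continuousAt.continuousWithinAt
  · intro θ hθ
    rw [interior_Ioo] at hθ
    exact hderiv θ hθ
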